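/- arXiv:2402.11974 — 2 statements merged into one kernel-verified Lean document; each statement's English description precedes it below -/
import Mathlib

section
/- Given $R_0 > 1$, the system $\mu_H N_H - \frac{b_0^{\alpha}}{N_H}\beta_V^H S \mu_V^{1-\alpha} I_V - \mu_H S = 0$, $\frac{b_0^{\alpha}}{N_H}\beta_V^H S \mu_V^{1-\alpha} I_V - \frac{\mu_H^{1-\beta}}{C^{\beta}} I_H - \mu_H I_H = 0$, $\frac{b_0^{p}}{N_H C^{p}}\beta_H^V (\frac{\Pi_V}{\mu_V} - I_V) \mu_H^{1-p} I_H - \mu_V I_V = 0$ has a unique solution with $S, I_H, I_V > 0$; if $R_0 \le 1$ the only nonnegative solution is $(N_H, 0, 0)$. -/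
/-- Auxiliary lemma: existence and uniqueness of the endemic equilibrium for the
abstract system with positive coefficients, when above threshold. -/
lemma endemic_aux (a m k Pv μH NH μV : ℝ)
    (ha : 0 < a) (hm : 0 < m) (hk : 0 < k) (hPv : 0 < Pv)
    (hμH : 0 < μH) (hNH : 0 < NH) (hμV : 0 < μV)
    (hgt : μV * m < k * a * NH * Pv) :
    ∃! x : ℝ × ℝ × ℝ,
      (0 < x.1 ∧ 0 < x.2.1 ∧ 0 < x.2.2) ∧
      μH * NH - a * x.1 * x.2.2 - μH * x.1 = 0 ∧
      a * x.1 * x.2.2 - m * x.2.1 = 0 ∧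
      k * (Pv - x.2.2) * x.2.1 - μV * x.2.2 = 0 := by
  have hsum : 0 < k * μH * NH + μV * m := by positivity
  have hgt' : 0 < k * a * NH * Pv - μV * m := by linarith
  obtain ⟨IV, hIVdef⟩ : ∃ IV : ℝ,
      IV = μH * (k * a * NH * Pv - μV * m) / (a * (k * μH * NH + μV * m)) := ⟨_, rfl⟩
  have hIV : 0 < IV := by rw [hIVdef]; positivity
  have hadm : 0 < a * IV + μH := by positivity
  obtain ⟨S, hSdef⟩ : ∃ S : ℝ, S = μH * NH / (a * IV + μH) := ⟨_, rfl⟩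
  have hS : 0 < S := by rw [hSdef]; positivity
  obtain ⟨IH, hIHdef⟩ : ∃ IH : ℝ, IH = a * S * IV / m := ⟨_, rfl⟩
  have hIH : 0 < IH := by rw [hIHdef]; positivity
  have hkey : k * (Pv - IV) * (a * S) = μV * m := by
    rw [hSdef, hIVdef]
    field_simp
    ring_nf
    field_simp
  refine ⟨⟨S, IH, IV⟩, ⟨⟨hS, hIH, hIV⟩, ?_, ?_, ?_⟩, ?_⟩
  · rw [hSdef]; field_simp; ring
  · rw [hIHdef]; field_simp; ring
  · rw [hIHdef]
    field_simp
    linear_combination IV * hkey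
  · rintro ⟨S', IH', IV'⟩ ⟨⟨hS', hIH', hIV'⟩, e1, e2, e3⟩
    simp only [Prod.mk.injEq]
    have hquad : a * (k * μH * NH + μV * m) * IV' ^ 2
        = μH * (k * a * NH * Pv - μV * m) * IV' := by
      linear_combination (-((a * IV' + μH) * m)) * e3
        - (a * IV' + μH) * (k * (Pv - IV')) * e2 - k * (Pv - IV') * a * IV' * e1
    have hlin : a * (k * μH * NH + μV * m) * IV'
        = μH * (k * a * NH * Pv - μV * m) :=
      mul_right_cancel₀ (ne_of_gt hIV') (by linear_combination hquad)
    have hIVeq : IV' = IV := by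
      rw [hIVdef, eq_div_iff (by positivity : a * (k * μH * NH + μV * m) ≠ 0)]
      linear_combination hlin
    have hSeq : S' = S := by
      rw [hSdef, ← hIVeq, eq_div_iff (by rw [hIVeq]; exact hadm.ne')]
      linear_combination -e1
    have hIHeq : IH' = IH := by
      rw [hIHdef, ← hSeq, ← hIVeq, eq_div_iff hm.ne']
      linear_combination -e2
    exact ⟨hSeq, hIHeq, hIVeq⟩

/-- Auxiliary lemma: below threshold, the disease-free equilibrium is the only
nonnegative solution. -/
lemma dfe_aux (a m k Pv μH NH μV : ℝ)
    (ha : 0 < a) (hm : 0 < m) (hk : 0 < k) (hPv : 0 < Pv)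
    (hμH : 0 < μH) (hNH : 0 < NH) (hμV : 0 < μV)
    (hle : k * a * NH * Pv ≤ μV * m)
    (S IH IV : ℝ) (hS : 0 ≤ S) (hIH : 0 ≤ IH) (hIV : 0 ≤ IV)
    (e1 : μH * NH - a * S * IV - μH * S = 0)
    (e2 : a * S * IV - m * IH = 0)
    (e3 : k * (Pv - IV) * IH - μV * IV = 0) :
    S = NH ∧ IH = 0 ∧ IV = 0 := by
  have hsum : 0 < k * μH * NH + μV * m := by positivity
  have hquad : a * (k * μH * NH + μV * m) * IV ^ 2
      = μH * (k * a * NH * Pv - μV * m) * IV := by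
    linear_combination (-((a * IV + μH) * m)) * e3
      - (a * IV + μH) * (k * (Pv - IV)) * e2 - k * (Pv - IV) * a * IV * e1
  have hIV0 : IV = 0 := by
    by_contra h
    have hIVpos : 0 < IV := lt_of_le_of_ne hIV (Ne.symm h)
    have h1 : 0 < a * (k * μH * NH + μV * m) * IV ^ 2 := by positivity
    have h2 : μH * (k * a * NH * Pv - μV * m) * IV ≤ 0 := by
      have hnp : k * a * NH * Pv - μV * m ≤ 0 := by linarith
      have : μH * (k * a * NH * Pv - μV * m) ≤ 0 :=
        mul_nonpos_of_nonneg_of_nonpos hμH.le hnp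
      exact mul_nonpos_of_nonpos_of_nonneg this hIV
    linarith
  have hIH0 : IH = 0 := by
    have hmIH : m * IH = 0 := by rw [hIV0] at e2; linear_combination -e2
    exact (mul_eq_zero.1 hmIH).resolve_left hm.ne'
  have hSNH : S = NH := by
    rw [hIV0] at e1
    have : μH * S = μH * NH := by linear_combination -e1
    exact mul_left_cancel₀ hμH.ne' this
  exact ⟨hSNH, hIH0, hIV0⟩

theorem stmt_9 (b0 βVH βHV μH μV PiV NH C α β p : ℝ)
    (hb0 : 0 < b0) (hβVH : 0 < βVH) (hβHV : 0 < βHV) (hμH : 0 < μH) (hμV : 0 < μV)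
    (hPiV : 0 < PiV) (hNH : 0 < NH) (hC : 0 < C)
    (hα : α ∈ Set.Ioc (0:ℝ) 1) (hβ : β ∈ Set.Ioc (0:ℝ) 1) (hp : p ∈ Set.Ioc (0:ℝ) 1)
    (R0 : ℝ)
    (hR0 : R0 = Real.sqrt (PiV * b0 ^ (α + p) * βVH * βHV * C ^ β /
        (NH * C ^ p * μV ^ (1 + α) * μH ^ (p - β) * (μH ^ β * C ^ β + 1)))) :
    (1 < R0 → ∃! x : ℝ × ℝ × ℝ,
      (0 < x.1 ∧ 0 < x.2.1 ∧ 0 < x.2.2) ∧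
      μH * NH - b0 ^ α / NH * βVH * x.1 * μV ^ (1 - α) * x.2.2 - μH * x.1 = 0 ∧
      b0 ^ α / NH * βVH * x.1 * μV ^ (1 - α) * x.2.2
        - μH ^ (1 - β) / C ^ β * x.2.1 - μH * x.2.1 = 0 ∧
      b0 ^ p / (NH * C ^ p) * βHV * (PiV / μV - x.2.2) * μH ^ (1 - p) * x.2.1
        - μV * x.2.2 = 0) ∧
    (R0 ≤ 1 → ∀ S IH IV : ℝ, 0 ≤ S → 0 ≤ IH → 0 ≤ IV →
      (μH * NH - b0 ^ α / NH * βVH * S * μV ^ (1 - α) * IV - μH * S = 0 ∧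
       b0 ^ α / NH * βVH * S * μV ^ (1 - α) * IV
         - μH ^ (1 - β) / C ^ β * IH - μH * IH = 0 ∧
       b0 ^ p / (NH * C ^ p) * βHV * (PiV / μV - IV) * μH ^ (1 - p) * IH
         - μV * IV = 0) →
      S = NH ∧ IH = 0 ∧ IV = 0) := by
  have ha : 0 < b0 ^ α / NH * βVH * μV ^ (1 - α) := by positivity
  have hm : 0 < μH ^ (1 - β) / C ^ β + μH := by positivity
  have hk : 0 < b0 ^ p / (NH * C ^ p) * βHV * μH ^ (1 - p) := by positivity
  have hPv : 0 < PiV / μV := by positivity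
  have hden : 0 < μV * (μH ^ (1 - β) / C ^ β + μH) := by positivity
  have hEeq : PiV * b0 ^ (α + p) * βVH * βHV * C ^ β /
        (NH * C ^ p * μV ^ (1 + α) * μH ^ (p - β) * (μH ^ β * C ^ β + 1))
      = b0 ^ p / (NH * C ^ p) * βHV * μH ^ (1 - p) *
          (b0 ^ α / NH * βVH * μV ^ (1 - α)) * NH * (PiV / μV) /
        (μV * (μH ^ (1 - β) / C ^ β + μH)) := by
    rw [Real.rpow_add hb0, Real.rpow_add hμV, Real.rpow_sub hμH,
      Real.rpow_sub hμV, Real.rpow_sub hμH, Real.rpow_sub hμH,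
      Real.rpow_one]
    have h1 : (0:ℝ) < μH ^ β := Real.rpow_pos_of_pos hμH β
    have h2 : (0:ℝ) < μH ^ p := Real.rpow_pos_of_pos hμH p
    have h3 : (0:ℝ) < μV ^ α := Real.rpow_pos_of_pos hμV α
    have h4 : (0:ℝ) < C ^ β := Real.rpow_pos_of_pos hC β
    have h5 : (0:ℝ) < C ^ p := Real.rpow_pos_of_pos hC p
    have h6 : (0:ℝ) < μH ^ β * C ^ β + 1 := by positivity
    have h7 : (0:ℝ) < μH / μH ^ β / C ^ β + μH := by positivity
    field_simp
    simp only [Real.rpow_one]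
    ring
  have hsqrt : 1 < R0 ↔ μV * (μH ^ (1 - β) / C ^ β + μH) <
      b0 ^ p / (NH * C ^ p) * βHV * μH ^ (1 - p) *
        (b0 ^ α / NH * βVH * μV ^ (1 - α)) * NH * (PiV / μV) := by
    rw [hR0, hEeq, Real.lt_sqrt (by norm_num : (0:ℝ) ≤ 1), one_pow, one_lt_div hden]
  constructor
  · intro h
    obtain ⟨x, ⟨hpos, e1, e2, e3⟩, huniq⟩ :=
      endemic_aux (b0 ^ α / NH * βVH * μV ^ (1 - α)) (μH ^ (1 - β) / C ^ β + μH)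
        (b0 ^ p / (NH * C ^ p) * βHV * μH ^ (1 - p)) (PiV / μV) μH NH μV
        ha hm hk hPv hμH hNH hμV (hsqrt.1 h)
    refine ⟨x, ⟨hpos, by linear_combination e1, by linear_combination e2,
      by linear_combination e3⟩, ?_⟩
    rintro y ⟨hy, f1, f2, f3⟩
    exact huniq y ⟨hy, by linear_combination f1, by linear_combination f2,
      by linear_combination f3⟩
  · intro h S IH IV hS hIH hIV ⟨f1, f2, f3⟩
    have hle : b0 ^ p / (NH * C ^ p) * βHV * μH ^ (1 - p) *
        (b0 ^ α / NH * βVH * μV ^ (1 - α)) * NH * (PiV / μV) ≤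
        μV * (μH ^ (1 - β) / C ^ β + μH) := by
      by_contra hc
      push_neg at hc
      exact absurd (hsqrt.2 hc) (not_lt.2 h)
    exact dfe_aux (b0 ^ α / NH * βVH * μV ^ (1 - α)) (μH ^ (1 - β) / C ^ β + μH)
      (b0 ^ p / (NH * C ^ p) * βHV * μH ^ (1 - p)) (PiV / μV) μH NH μV
      ha hm hk hPv hμH hNH hμV hle S IH IV hS hIH hIV
      (by linear_combination f1) (by linear_combination f2) (by linear_combination f3)
end

section
/- Let $\mu > 0$, $0 < y < 1$, and let $I : [0,\infty) \to [0, \infty)$ be continuous and bounded by $N > 0$. For $K, \mu_V > 0$ define $B_2(t) = \int_0^t e^{-K(t-t_1)} \int_0^{t_1} e^{-\mu_V(t_1 - s)} I(s)\, ds\, dt_1$. If $i_0 = \limsup_{t\to\infty} I(t)$, then $\limsup_{t\to\infty} B_2(t) \le \frac{i_0}{\mu_V K}$. -/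
open Filter

lemma my_int_exp (a T t : ℝ) (ha : a ≠ 0) :
    ∫ s in T..t, Real.exp (a * s) = (Real.exp (a * t) - Real.exp (a * T)) / a := by
  rw [eq_div_iff ha, mul_comm]
  rw [intervalIntegral.mul_integral_comp_mul_left (f := Real.exp) a, integral_exp]

lemma my_int_exp_const (a C T t : ℝ) (ha : a ≠ 0) :
    ∫ s in T..t, Real.exp (-a * (t - s)) * C
      = Real.exp (-a * t) * C * ((Real.exp (a * t) - Real.exp (a * T)) / a) := by
  have h : (fun s => Real.exp (-a * (t - s)) * C)
      = fun s => (Real.exp (-a * t) * C) * Real.exp (a * s) := by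
    funext s
    rw [mul_comm (Real.exp (-a * t)) C, mul_assoc, ← Real.exp_add]
    ring_nf
  rw [h, intervalIntegral.integral_const_mul, my_int_exp a T t ha]

lemma my_int_bound (a C T t : ℝ) (ha : 0 < a) (hC : 0 ≤ C) (hTt : T ≤ t) :
    ∫ s in T..t, Real.exp (-a * (t - s)) * C ≤ C / a := by
  rw [my_int_exp_const a C T t ha.ne']
  have h1 : Real.exp (-a * t) * (Real.exp (a * t) - Real.exp (a * T)) ≤ 1 := by
    have e1 : Real.exp (-a * t) * Real.exp (a * t) = 1 := by
      rw [← Real.exp_add]; simp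
    nlinarith [Real.exp_pos (-a * t), Real.exp_pos (a * T)]
  have h2 : Real.exp (-a * t) * C * ((Real.exp (a * t) - Real.exp (a * T)) / a)
      = (Real.exp (-a * t) * (Real.exp (a * t) - Real.exp (a * T))) * C / a := by ring
  rw [h2]
  apply (div_le_div_iff_of_pos_right ha).mpr
  nlinarith

lemma my_integrable (a t u v : ℝ) (f : ℝ → ℝ) (hf : Continuous f) :
    IntervalIntegrable (fun s => Real.exp (-a * (t - s)) * f s) MeasureTheory.volume u v :=
  ((Real.continuous_exp.comp (by continuity)).mul hf).intervalIntegrable u v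

lemma my_g_cont (a : ℝ) (f : ℝ → ℝ) (hf : Continuous f) :
    Continuous (fun t => ∫ s in (0:ℝ)..t, Real.exp (-a * (t - s)) * f s) := by
  have h : (fun t => ∫ s in (0:ℝ)..t, Real.exp (-a * (t - s)) * f s)
      = fun t => Real.exp (-a * t) * ∫ s in (0:ℝ)..t, Real.exp (a * s) * f s := by
    funext t
    rw [← intervalIntegral.integral_const_mul]
    apply intervalIntegral.integral_congr
    intro s _
    simp only [← mul_assoc, ← Real.exp_add]
    ring_nf
  rw [h]
  exact (Real.continuous_exp.comp (by continuity)).mul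
    (intervalIntegral.continuous_primitive
      (fun u v => ((Real.continuous_exp.comp (by continuity)).mul hf).intervalIntegrable u v) 0)

lemma my_g_nonneg (a : ℝ) (f : ℝ → ℝ) (hf0 : ∀ s ≥ (0:ℝ), 0 ≤ f s) (t : ℝ) (ht : 0 ≤ t) :
    0 ≤ ∫ s in (0:ℝ)..t, Real.exp (-a * (t - s)) * f s :=
  intervalIntegral.integral_nonneg ht fun s hs =>
    mul_nonneg (Real.exp_nonneg _) (hf0 s hs.1)

lemma my_g_le (a N : ℝ) (ha : 0 < a) (hN : 0 ≤ N) (f : ℝ → ℝ) (hf : Continuous f)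
    (hfN : ∀ s ≥ (0:ℝ), f s ≤ N) (t : ℝ) (ht : 0 ≤ t) :
    ∫ s in (0:ℝ)..t, Real.exp (-a * (t - s)) * f s ≤ N / a := by
  calc ∫ s in (0:ℝ)..t, Real.exp (-a * (t - s)) * f s
      ≤ ∫ s in (0:ℝ)..t, Real.exp (-a * (t - s)) * N := by
        apply intervalIntegral.integral_mono_on ht (my_integrable a t 0 t f hf)
          ((Real.continuous_exp.comp (by continuity)).mul continuous_const
            |>.intervalIntegrable 0 t)
        intro s hs
        exact mul_le_mul_of_nonneg_left (hfN s hs.1) (Real.exp_nonneg _)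
    _ ≤ N / a := my_int_bound a N 0 t ha hN ht

lemma my_conv_ev (a c N : ℝ) (ha : 0 < a) (hc : 0 ≤ c) (hN : 0 ≤ N)
    (f : ℝ → ℝ) (hf : Continuous f) (hf0 : ∀ s ≥ (0:ℝ), 0 ≤ f s)
    (hfN : ∀ s ≥ (0:ℝ), f s ≤ N)
    (hev : ∀ ε > (0:ℝ), ∀ᶠ s in atTop, f s ≤ c + ε) :
    ∀ ε > (0:ℝ), ∀ᶠ t in atTop,
      (∫ s in (0:ℝ)..t, Real.exp (-a * (t - s)) * f s) ≤ c / a + ε := by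
  intro ε hε
  obtain ⟨T₀, hT₀⟩ := eventually_atTop.mp (hev (a * ε / 2) (by positivity))
  set T := max T₀ 0 with hT
  have hT0 : 0 ≤ T := le_max_right _ _
  have hdecay : Tendsto (fun t => N * T * Real.exp (a * T) * Real.exp (-a * t)) atTop (nhds 0) := by
    have hb : Tendsto (fun t : ℝ => -a * t) atTop atBot :=
      (tendsto_const_mul_atBot_of_neg (by linarith)).mpr tendsto_id
    have h1 : Tendsto (fun t : ℝ => Real.exp (-a * t)) atTop (nhds 0) :=
      Real.tendsto_exp_comp_nhds_zero.mpr hb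
    simpa using h1.const_mul (N * T * Real.exp (a * T))
  have hsm : ∀ᶠ t in atTop, N * T * Real.exp (a * T) * Real.exp (-a * t) < ε / 2 :=
    hdecay.eventually (gt_mem_nhds (by positivity))
  filter_upwards [hsm, eventually_ge_atTop T] with t hsm htT
  have ht0 : (0:ℝ) ≤ t := le_trans hT0 htT
  have hsplit : (∫ s in (0:ℝ)..t, Real.exp (-a * (t - s)) * f s)
      = (∫ s in (0:ℝ)..T, Real.exp (-a * (t - s)) * f s)
        + ∫ s in T..t, Real.exp (-a * (t - s)) * f s :=
    (intervalIntegral.integral_add_adjacent_intervals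
      (my_integrable a t 0 T f hf) (my_integrable a t T t f hf)).symm
  have h1 : (∫ s in (0:ℝ)..T, Real.exp (-a * (t - s)) * f s)
      ≤ N * T * Real.exp (a * T) * Real.exp (-a * t) := by
    calc (∫ s in (0:ℝ)..T, Real.exp (-a * (t - s)) * f s)
        ≤ ∫ s in (0:ℝ)..T, Real.exp (-a * (t - T)) * N := by
          apply intervalIntegral.integral_mono_on hT0 (my_integrable a t 0 T f hf)
            (intervalIntegrable_const)
          intro s hs
          have hfs := hfN s hs.1
          have hfs0 := hf0 s hs.1
          have hle : Real.exp (-a * (t - s)) ≤ Real.exp (-a * (t - T)) := by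
            apply Real.exp_le_exp.mpr; nlinarith [hs.2]
          nlinarith [Real.exp_nonneg (-a * (t - s))]
      _ = T * (Real.exp (-a * (t - T)) * N) := by
          rw [intervalIntegral.integral_const]; simp
      _ = N * T * Real.exp (a * T) * Real.exp (-a * t) := by
          rw [show -a * (t - T) = a * T + -a * t by ring, Real.exp_add]; ring
  have h2 : (∫ s in T..t, Real.exp (-a * (t - s)) * f s) ≤ c / a + ε / 2 := by
    calc (∫ s in T..t, Real.exp (-a * (t - s)) * f s)
        ≤ ∫ s in T..t, Real.exp (-a * (t - s)) * (c + a * ε / 2) := by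
          apply intervalIntegral.integral_mono_on htT (my_integrable a t T t f hf)
            (((Real.continuous_exp.comp (by continuity)).mul
              continuous_const).intervalIntegrable T t)
          intro s hs
          exact mul_le_mul_of_nonneg_left
            (hT₀ s (le_trans (le_max_left _ _) hs.1)) (Real.exp_nonneg _)
      _ ≤ (c + a * ε / 2) / a := my_int_bound a _ T t ha (by positivity) htT
      _ = c / a + ε / 2 := by field_simp
  rw [hsplit]
  linarith

theorem stmt_15 (μ K μV N : ℝ) (hμ : 0 < μ) (hK : 0 < K) (hμV : 0 < μV) (hN : 0 < N)
    (y : ℝ) (hy0 : 0 < y) (hy1 : y < 1)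
    (I : ℝ → ℝ) (hIcont : Continuous I) (hInonneg : ∀ t ≥ (0:ℝ), 0 ≤ I t)
    (hIbdd : ∀ t ≥ (0:ℝ), I t ≤ N)
    (i0 : ℝ) (hi0 : i0 = limsup I atTop)
    (B₂ : ℝ → ℝ)
    (hB₂ : ∀ t : ℝ, B₂ t = ∫ t₁ in (0:ℝ)..t, Real.exp (-K * (t - t₁)) *
        ∫ s in (0:ℝ)..t₁, Real.exp (-μV * (t₁ - s)) * I s) :
    limsup B₂ atTop ≤ i0 / (μV * K) := by
  have hIb : IsBoundedUnder (· ≤ ·) atTop I :=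
    isBoundedUnder_of_eventually_le (a := N)
      (by filter_upwards [eventually_ge_atTop (0:ℝ)] with t ht using hIbdd t ht)
  have hi0nn : 0 ≤ i0 := by
    rw [hi0]
    exact le_limsup_of_frequently_le
      (((eventually_ge_atTop (0:ℝ)).mono hInonneg).frequently) hIb
  have hevI : ∀ ε > (0:ℝ), ∀ᶠ t in atTop, I t ≤ i0 + ε := by
    intro ε hε
    have : limsup I atTop < i0 + ε := by rw [← hi0]; linarith
    exact (eventually_lt_of_limsup_lt this hIb).mono fun _ h => h.le
  set J : ℝ → ℝ := fun u => ∫ s in (0:ℝ)..u, Real.exp (-μV * (u - s)) * I s with hJ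
  have hJcont : Continuous J := my_g_cont μV I hIcont
  have hJ0 : ∀ u ≥ (0:ℝ), 0 ≤ J u := fun u hu => my_g_nonneg μV I hInonneg u hu
  have hJN : ∀ u ≥ (0:ℝ), J u ≤ N / μV := fun u hu =>
    my_g_le μV N hμV hN.le I hIcont hIbdd u hu
  have hevJ : ∀ ε > (0:ℝ), ∀ᶠ u in atTop, J u ≤ i0 / μV + ε :=
    my_conv_ev μV i0 N hμV hi0nn hN.le I hIcont hInonneg hIbdd hevI
  have hevB : ∀ ε > (0:ℝ), ∀ᶠ t in atTop, B₂ t ≤ i0 / μV / K + ε := by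
    intro ε hε
    filter_upwards [my_conv_ev K (i0 / μV) (N / μV) hK (by positivity) (by positivity)
      J hJcont hJ0 hJN hevJ ε hε] with t ht
    rw [hB₂ t]
    exact ht
  have hcob : IsCoboundedUnder (· ≤ ·) atTop B₂ := by
    apply isCoboundedUnder_le_of_eventually_le atTop (x := 0)
    filter_upwards [eventually_ge_atTop (0:ℝ)] with t ht
    rw [hB₂ t]
    exact my_g_nonneg K J hJ0 t ht
  have key : ∀ ε > (0:ℝ), limsup B₂ atTop ≤ i0 / (μV * K) + ε := by
    intro ε hε
    rw [show i0 / (μV * K) = i0 / μV / K by rw [div_div]]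
    exact limsup_le_of_le hcob (hevB ε hε)
  exact le_of_forall_pos_le_add key
end
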